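/- arXiv:2505.08974 — 4 statements merged into one kernel-verified Lean document; each statement's English description precedes it below -/
import Mathlib

section
/- Let ρ > 0 and k ≥ 1/ρ. The function f(x) = (1/x)·(ρ/x)^{kx} is convex on the interval [ρ, ∞). -/
/-- For ρ > 0 and k ≥ 1/ρ, the function f(x) = (1/x)·(ρ/x)^{kx}
    = (1/x)·exp(kx(log ρ − log x)) is convex on [ρ, ∞). -/
theorem f_convexOn (ρ k : ℝ) (hρ : 0 < ρ) (hk : 1 / ρ ≤ k)
    (f : ℝ → ℝ)
    (hf : ∀ x : ℝ, f x = (1 / x) * Real.exp (k * x * (Real.log ρ - Real.log x))) :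
    ConvexOn ℝ (Set.Ici ρ) f := by
  have hk0 : 0 < k := lt_of_lt_of_le (by positivity) hk
  set G : ℝ → ℝ := fun x => k * x * (Real.log ρ - Real.log x) - Real.log x with hG
  set G' : ℝ → ℝ := fun x => k * (Real.log ρ - Real.log x) - k - x⁻¹ with hG'
  set F : ℝ → ℝ := fun x => Real.exp (G x) with hFdef
  set F' : ℝ → ℝ := fun x => Real.exp (G x) * G' x with hF'def
  -- f = F on positive reals
  have hfF : ∀ x : ℝ, 0 < x → f x = F x := by
    intro x hx
    rw [hf x]
    simp only [hFdef, hG, Real.exp_sub, Real.exp_log hx]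
    field_simp
  have hGd : ∀ x : ℝ, 0 < x → HasDerivAt G (G' x) x := by
    intro x hx
    have h1 : HasDerivAt (fun x : ℝ => k * x) k x := by
      simpa using (hasDerivAt_id x).const_mul k
    have h2 : HasDerivAt (fun x : ℝ => Real.log ρ - Real.log x) (-x⁻¹) x :=
      (Real.hasDerivAt_log hx.ne').const_sub _
    have h3 : HasDerivAt G (k * (Real.log ρ - Real.log x) + k * x * -x⁻¹ - x⁻¹) x :=
      (h1.mul h2).sub (Real.hasDerivAt_log hx.ne')
    convert h3 using 1
    simp only [hG']
    rw [mul_neg, mul_assoc, mul_inv_cancel₀ hx.ne']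
    ring
  have hFd : ∀ x : ℝ, 0 < x → HasDerivAt F (F' x) x := fun x hx => (hGd x hx).exp
  have hG'd : ∀ x : ℝ, 0 < x → HasDerivAt G' (-(k * x⁻¹) + x⁻¹ ^ 2) x := by
    intro x hx
    have h2 : HasDerivAt (fun x : ℝ => Real.log ρ - Real.log x) (-x⁻¹) x :=
      (Real.hasDerivAt_log hx.ne').const_sub _
    have h3 : HasDerivAt G' (k * -x⁻¹ - -(x ^ 2)⁻¹) x :=
      ((h2.const_mul k).sub_const k).sub (hasDerivAt_inv hx.ne')
    convert h3 using 1
    ring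
  have hF'd : ∀ x : ℝ, 0 < x →
      HasDerivAt F' (Real.exp (G x) * (G' x ^ 2 + (-(k * x⁻¹) + x⁻¹ ^ 2))) x := by
    intro x hx
    have : HasDerivAt F' (Real.exp (G x) * G' x * G' x + Real.exp (G x) * (-(k * x⁻¹) + x⁻¹ ^ 2)) x :=
      (hFd x hx).mul (hG'd x hx)
    convert this using 1
    ring
  have hIci : Set.Ici ρ ⊆ Set.Ioi (0 : ℝ) := fun x hx => lt_of_lt_of_le hρ hx
  have hderivF : ∀ x : ℝ, 0 < x → deriv F x = F' x := fun x hx => (hFd x hx).deriv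
  -- F is convex on Ici ρ
  have hconv : ConvexOn ℝ (Set.Ici ρ) F := by
    apply convexOn_of_deriv2_nonneg (convex_Ici ρ)
    · exact fun x hx => ((hFd x (hIci hx)).continuousAt).continuousWithinAt
    · rw [interior_Ici]
      exact fun x hx => ((hFd x (lt_trans hρ hx)).differentiableAt).differentiableWithinAt
    · rw [interior_Ici]
      intro x hx
      have hx0 : (0:ℝ) < x := lt_trans hρ hx
      have hev : deriv F =ᶠ[nhds x] F' := by
        filter_upwards [IsOpen.mem_nhds isOpen_Ioi hx0] with y hy
        exact hderivF y hy
      exact (((hF'd x hx0).differentiableAt).congr_of_eventuallyEq hev).differentiableWithinAt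
    · rw [interior_Ici]
      intro x hx
      have hx0 : (0:ℝ) < x := lt_trans hρ hx
      have hev : deriv F =ᶠ[nhds x] F' := by
        filter_upwards [IsOpen.mem_nhds isOpen_Ioi hx0] with y hy
        exact hderivF y hy
      have h2 : deriv (deriv F) x = Real.exp (G x) * (G' x ^ 2 + (-(k * x⁻¹) + x⁻¹ ^ 2)) := by
        rw [Filter.EventuallyEq.deriv_eq hev]
        exact (hF'd x hx0).deriv
      show 0 ≤ deriv^[2] F x
      rw [Function.iterate_succ, Function.iterate_one, Function.comp_apply, h2]
      have ht : 0 ≤ k * (Real.log x - Real.log ρ) := by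
        have := Real.log_le_log hρ (le_of_lt hx)
        nlinarith
      have hxi : 0 < x⁻¹ := inv_pos.mpr hx0
      have hG'val : G' x = -(k * (Real.log x - Real.log ρ) + k + x⁻¹) := by
        simp only [hG']; ring
      apply mul_nonneg (Real.exp_nonneg _)
      rw [hG'val]
      set t := k * (Real.log x - Real.log ρ)
      nlinarith [sq_nonneg t, sq_nonneg (t + k), mul_pos hk0 hxi, sq_nonneg x⁻¹]
  -- transfer to f
  obtain ⟨hc, hineq⟩ := hconv
  refine ⟨hc, fun x hx y hy a b ha hb hab => ?_⟩
  have hmem : a • x + b • y ∈ Set.Ici ρ := hc hx hy ha hb hab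
  rw [hfF _ (hIci hmem), hfF _ (hIci hx), hfF _ (hIci hy)]
  exact hineq hx hy ha hb hab
end

section
/- Let ρ > 0 and k ≥ 1/ρ, and let f(x) = (1/x)·(ρ/x)^{kx}. If x₀ > 0 satisfies f''(x₀) = 0, then x₀ < ρ. Consequently f'' has no zeros on [ρ, ∞). -/
/-- For ρ > 0 and k ≥ 1/ρ, if x₀ > 0 is a zero of the second derivative of
    f(x) = (1/x)·(ρ/x)^{kx}, then x₀ < ρ; consequently f'' has no zeros on [ρ, ∞). -/
theorem second_deriv_no_zero_on_Ici (ρ k : ℝ) (hρ : 0 < ρ) (hk : 1 / ρ ≤ k)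
    (f : ℝ → ℝ)
    (hf : ∀ x : ℝ, f x = (1 / x) * Real.exp (k * x * (Real.log ρ - Real.log x))) :
    (∀ x₀ : ℝ, 0 < x₀ → deriv (deriv f) x₀ = 0 → x₀ < ρ) ∧
      (∀ x : ℝ, ρ ≤ x → deriv (deriv f) x ≠ 0) := by
  have hk0 : 0 < k := lt_of_lt_of_le (by positivity) hk
  set h : ℝ → ℝ := fun x => k * x * (Real.log ρ - Real.log x) - Real.log x with hh
  set h1 : ℝ → ℝ := fun x => k * (Real.log ρ - Real.log x) - k - 1 / x with hh1
  -- f agrees with exp ∘ h on Ioi 0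
  have hfeq : ∀ x ∈ Set.Ioi (0:ℝ), f x = Real.exp (h x) := by
    intro x hx
    rw [hf, hh]
    simp only [Real.exp_sub, Real.exp_log hx]
    ring
  -- derivatives at a point x > 0
  have hderh : ∀ x : ℝ, 0 < x → HasDerivAt h (h1 x) x := by
    intro x hx
    have hlog := Real.hasDerivAt_log (ne_of_gt hx)
    have h2 : HasDerivAt (fun y : ℝ => k * y) k x := by
      simpa using (hasDerivAt_id x).const_mul k
    have h3 : HasDerivAt (fun y : ℝ => Real.log ρ - Real.log y) (-(x⁻¹)) x := by
      simpa using (hasDerivAt_const x (Real.log ρ)).fun_sub hlog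
    have h4 : HasDerivAt h (k * (Real.log ρ - Real.log x) + k * x * -x⁻¹ - x⁻¹) x :=
      (h2.fun_mul h3).fun_sub hlog
    convert h4 using 1
    rw [hh1]
    field_simp
    ring
  have hderh1 : ∀ x : ℝ, 0 < x →
      HasDerivAt h1 (k * (-(x⁻¹)) - -(x ^ 2)⁻¹) x := by
    intro x hx
    have hlog := Real.hasDerivAt_log (ne_of_gt hx)
    have h3 : HasDerivAt (fun y : ℝ => Real.log ρ - Real.log y) (-(x⁻¹)) x := by
      simpa using (hasDerivAt_const x (Real.log ρ)).fun_sub hlog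
    have h5 := ((h3.const_mul k).sub_const k).fun_sub (hasDerivAt_inv (ne_of_gt hx))
    simpa [hh1, one_div] using h5
  -- first derivative of f on Ioi 0
  have hderf : ∀ x : ℝ, 0 < x → deriv f x = Real.exp (h x) * h1 x := by
    intro x hx
    have heq : f =ᶠ[nhds x] fun y => Real.exp (h y) :=
      Filter.eventually_of_mem (isOpen_Ioi.mem_nhds hx) hfeq
    rw [heq.deriv_eq]
    exact ((hderh x hx).exp).deriv
  -- second derivative of f on Ioi 0
  have hderf2 : ∀ x : ℝ, 0 < x →
      deriv (deriv f) x
        = Real.exp (h x) * h1 x * h1 x + Real.exp (h x) * (k * (-(x⁻¹)) - -(x ^ 2)⁻¹) := by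
    intro x hx
    have heq : deriv f =ᶠ[nhds x] fun y => Real.exp (h y) * h1 y := by
      refine Filter.eventually_of_mem (isOpen_Ioi.mem_nhds hx) ?_
      intro y hy
      exact hderf y hy
    rw [heq.deriv_eq]
    exact (((hderh x hx).exp).mul (hderh1 x hx)).deriv
  -- positivity for x ≥ ρ
  have key : ∀ x : ℝ, ρ ≤ x → 0 < deriv (deriv f) x := by
    intro x hx
    have hx0 : 0 < x := lt_of_lt_of_le hρ hx
    rw [hderf2 x hx0]
    have hlog : Real.log ρ - Real.log x ≤ 0 := by
      have := Real.log_le_log hρ hx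
      linarith
    have hb : h1 x ≤ -(k + 1 / x) := by
      rw [hh1]
      have : k * (Real.log ρ - Real.log x) ≤ 0 :=
        mul_nonpos_of_nonneg_of_nonpos (le_of_lt hk0) hlog
      simp only []
      linarith
    have hbpos : 0 < k + 1 / x := by positivity
    have hsq : (k + 1 / x) ^ 2 ≤ h1 x * h1 x := by
      nlinarith [hb, hbpos]
    have hexp : 0 < Real.exp (h x) := Real.exp_pos _
    have hA : 0 < h1 x * h1 x + (k * (-(x⁻¹)) - -(x ^ 2)⁻¹) := by
      have h1x : (1:ℝ) / x = x⁻¹ := one_div x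
      have hx2 : (0:ℝ) < (x ^ 2)⁻¹ := by positivity
      have hxinv : (0:ℝ) < x⁻¹ := by positivity
      nlinarith [hsq, sq_nonneg (k + 1/x), hx2, hxinv, hk0]
    calc (0:ℝ) < Real.exp (h x) * (h1 x * h1 x + (k * (-(x⁻¹)) - -(x ^ 2)⁻¹)) :=
          mul_pos hexp hA
      _ = Real.exp (h x) * h1 x * h1 x + Real.exp (h x) * (k * (-(x⁻¹)) - -(x ^ 2)⁻¹) := by
          ring
  constructor
  · intro x₀ hx₀ hzero
    by_contra hcon
    push_neg at hcon
    exact absurd hzero (ne_of_gt (key x₀ hcon))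
  · intro x hx
    exact ne_of_gt (key x hx)
end

section
/- Consider the bipartite graph G_n^2 consisting of n+1 connected components: one component with a single dispatcher d_0 adjacent to n servers v_1, …, v_n, and n components each with a single dispatcher d_k adjacent to a single server u_k (1 ≤ k ≤ n). Then the flexibility metrics satisfy α_{G_n^2} = (n+1)/2 and β_{G_n^2} = 2n/(n+1), and consequently α_{G_n^2}/β_{G_n^2} → ∞ as n → ∞. -/
/-- Example G_n^2 of the paper: n+1 connected components, one dispatcher d_0 adjacent
    to n servers v_1,…,v_n, and n dispatchers d_k each adjacent to a single server u_k.
    Then α_{G_n^2} = (n+1)/2 and β_{G_n^2} = 2n/(n+1); consequently the ratio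
    α_{G_n^2}/β_{G_n^2} tends to infinity. -/
theorem example_Gn2_metrics
    (n : ℕ) (hn : 1 ≤ n)
    (E : Fin (n + 1) → (Fin n ⊕ Fin n) → Prop)
    (hE : ∀ (d : Fin (n + 1)) (u : Fin n ⊕ Fin n),
      E d u ↔ (match u with
        | Sum.inl _ => (d : ℕ) = 0
        | Sum.inr k => (d : ℕ) = (k : ℕ) + 1))
    (deg : Fin (n + 1) → ℕ)
    (hdeg : ∀ d, deg d = Nat.card {u : Fin n ⊕ Fin n // E d u})
    (α β : ℝ)
    (hα : α = (1 / (Fintype.card (Fin n ⊕ Fin n) : ℝ)) *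
      ∑ u : Fin n ⊕ Fin n, ((sInf {m : ℕ | ∃ d, E d u ∧ deg d = m} : ℕ) : ℝ))
    (hβ : β = (1 / (Fintype.card (Fin (n + 1)) : ℝ)) * ∑ d : Fin (n + 1), (deg d : ℝ)) :
    (α = ((n : ℝ) + 1) / 2 ∧ β = 2 * (n : ℝ) / ((n : ℝ) + 1)) ∧
      Filter.Tendsto
        (fun m : ℕ => (((m : ℝ) + 1) / 2) / (2 * (m : ℝ) / ((m : ℝ) + 1)))
        Filter.atTop Filter.atTop := by
  classical
  have hnpos : (0:ℝ) < n := by exact_mod_cast hn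
  -- degree computation
  have hdcard : ∀ d : Fin (n+1), Nat.card {u : Fin n ⊕ Fin n // E d u}
      = (Finset.univ.filter (fun u : Fin n ⊕ Fin n =>
          match u with
          | Sum.inl _ => (d : ℕ) = 0
          | Sum.inr k => (d : ℕ) = (k : ℕ) + 1)).card := by
    intro d
    rw [Nat.card_eq_fintype_card, Fintype.card_subtype]
    congr 1
    apply Finset.filter_congr
    intro u _
    simp [hE]
  have hdeg0 : deg 0 = n := by
    rw [hdeg, hdcard]
    rw [Finset.card_filter]
    rw [Fintype.sum_sum_type]
    simp
  have hdegk : ∀ k : Fin n, deg k.succ = 1 := by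
    intro k
    rw [hdeg, hdcard]
    have hfil : (Finset.univ.filter (fun u : Fin n ⊕ Fin n =>
          match u with
          | Sum.inl _ => ((k.succ : Fin (n+1)) : ℕ) = 0
          | Sum.inr j => ((k.succ : Fin (n+1)) : ℕ) = (j : ℕ) + 1)) = {Sum.inr k} := by
      ext u
      rcases u with a | a <;> simp [Fin.val_succ, Fin.ext_iff, eq_comm]
    rw [hfil, Finset.card_singleton]
  -- sInf computations
  have hinfL : ∀ u : Fin n, sInf {m : ℕ | ∃ d, E d (Sum.inl u) ∧ deg d = m} = n := by
    intro u
    have hset : {m : ℕ | ∃ d, E d (Sum.inl u) ∧ deg d = m} = {n} := by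
      ext m
      simp only [Set.mem_setOf_eq, Set.mem_singleton_iff]
      constructor
      · rintro ⟨d, hd, rfl⟩
        rw [hE] at hd
        simp only at hd
        have : d = 0 := by ext; simpa using hd
        rw [this, hdeg0]
      · rintro rfl
        exact ⟨0, by rw [hE]; simp, hdeg0⟩
    rw [hset, csInf_singleton]
  have hinfR : ∀ k : Fin n, sInf {m : ℕ | ∃ d, E d (Sum.inr k) ∧ deg d = m} = 1 := by
    intro k
    have hset : {m : ℕ | ∃ d, E d (Sum.inr k) ∧ deg d = m} = {1} := by
      ext m
      simp only [Set.mem_setOf_eq, Set.mem_singleton_iff]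
      constructor
      · rintro ⟨d, hd, rfl⟩
        rw [hE] at hd
        simp only at hd
        have : d = k.succ := by ext; simpa [Fin.val_succ] using hd
        rw [this, hdegk]
      · rintro rfl
        exact ⟨k.succ, by rw [hE]; simp [Fin.val_succ], hdegk k⟩
    rw [hset, csInf_singleton]
  have hαval : α = ((n : ℝ) + 1) / 2 := by
    rw [hα, Fintype.sum_sum_type]
    simp only [hinfL, hinfR]
    rw [Finset.sum_const, Finset.sum_const]
    simp only [Finset.card_univ, Fintype.card_fin, Fintype.card_sum, nsmul_eq_mul,
      Nat.cast_one, mul_one, Nat.cast_add]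
    field_simp
    ring
  have hβval : β = 2 * (n : ℝ) / ((n : ℝ) + 1) := by
    rw [hβ, Fin.sum_univ_succ]
    simp only [hdeg0, hdegk, Fintype.card_fin, Finset.sum_const, Finset.card_univ,
      nsmul_eq_mul, Nat.cast_one, mul_one, Nat.cast_add]
    field_simp
    ring
  refine ⟨⟨hαval, hβval⟩, ?_⟩
  have hmain : Filter.Tendsto (fun m : ℕ => (m : ℝ) / 4) Filter.atTop Filter.atTop := by
    exact (tendsto_natCast_atTop_atTop).atTop_div_const (by norm_num)
  refine Filter.tendsto_atTop_mono' _ ?_ hmain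
  filter_upwards [Filter.eventually_ge_atTop 1] with m hm
  have hx : (1:ℝ) ≤ (m:ℝ) := by exact_mod_cast hm
  have hxpos : (0:ℝ) < (m:ℝ) := by linarith
  have heq : (((m : ℝ) + 1) / 2) / (2 * (m : ℝ) / ((m : ℝ) + 1))
      = ((m:ℝ)+1)^2 / (4*(m:ℝ)) := by
    field_simp
    ring
  rw [heq]
  rw [div_le_div_iff₀ (by norm_num) (by positivity)]
  nlinarith
end

section
/- Let ρ > 0, k ≥ 1/ρ, and let x, y be real numbers with ρ ≤ x ≤ y. Then (1/x)·(ρ/x)^{kx} ≥ (1/y)·(ρ/y)^{ky}, i.e., the geometric lower bound function f(x) = (ρ/x)^{kx}/x is monotone nonincreasing on [ρ, ∞); in particular, for a bipartite graph G with ρ ≤ α_G ≤ θ_G one has [r(ρ, α_G)]^k/α_G ≥ [r(ρ, θ_G)]^k/θ_G where r(ρ, x) = (ρ/x)^x. -/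
open Real Set

/-- For ρ > 0 and k ≥ 1/ρ, the function f(x) = (ρ/x)^{kx}/x is nonincreasing on
    [ρ, ∞); in particular, for ρ ≤ α_G ≤ θ_G one has
    [r(ρ,α_G)]^k/α_G ≥ [r(ρ,θ_G)]^k/θ_G where r(ρ,x) = (ρ/x)^x. -/
theorem geometric_bound_antitone (ρ k : ℝ) (hρ : 0 < ρ) (hk : 1 / ρ ≤ k) :
    (∀ x y : ℝ, ρ ≤ x → x ≤ y →
        (1 / y) * (ρ / y) ^ (k * y) ≤ (1 / x) * (ρ / x) ^ (k * x)) ∧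
      (∀ αG θG : ℝ, ρ ≤ αG → αG ≤ θG →
        ((ρ / θG) ^ θG) ^ k / θG ≤ ((ρ / αG) ^ αG) ^ k / αG) := by
  have hk0 : 0 < k := lt_of_lt_of_le (by positivity) hk
  set F : ℝ → ℝ := fun x => -Real.log x + k * x * (Real.log ρ - Real.log x) with hF
  have hderiv : ∀ x : ℝ, 0 < x →
      HasDerivAt F (-x⁻¹ + (k * (Real.log ρ - Real.log x) + k * x * (-x⁻¹))) x := by
    intro x hx
    have h1 : HasDerivAt (fun x : ℝ => -Real.log x) (-x⁻¹) x :=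
      (Real.hasDerivAt_log hx.ne').neg
    have h2 : HasDerivAt (fun x : ℝ => k * x) k x := by
      simpa using (hasDerivAt_id x).const_mul k
    have h3 : HasDerivAt (fun x : ℝ => Real.log ρ - Real.log x) (-x⁻¹) x := by
      simpa using ((Real.hasDerivAt_log hx.ne').const_sub (Real.log ρ))
    exact h1.add (h2.mul h3)
  have hanti : AntitoneOn F (Ici ρ) := by
    apply antitoneOn_of_deriv_nonpos (convex_Ici ρ)
    · exact fun x hx => ((hderiv x (lt_of_lt_of_le hρ hx)).continuousAt).continuousWithinAt
    · intro x hx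
      rw [interior_Ici] at hx
      exact ((hderiv x (lt_trans hρ hx)).differentiableAt).differentiableWithinAt
    · intro x hx
      rw [interior_Ici] at hx
      have hx0 : 0 < x := lt_trans hρ hx
      rw [(hderiv x hx0).deriv]
      have hlog : Real.log ρ - Real.log x ≤ 0 :=
        sub_nonpos.mpr (Real.log_le_log hρ hx.le)
      have h1 : k * (Real.log ρ - Real.log x) ≤ 0 :=
        mul_nonpos_of_nonneg_of_nonpos hk0.le hlog
      have h2 : k * x * (-x⁻¹) = -k := by field_simp
      rw [h2]
      have : (0:ℝ) < x⁻¹ := by positivity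
      linarith
  have key : ∀ x : ℝ, 0 < x → (1 / x) * (ρ / x) ^ (k * x) = Real.exp (F x) := by
    intro x hx
    have hdiv : (0:ℝ) < ρ / x := by positivity
    rw [hF]
    simp only
    rw [Real.exp_add, Real.exp_neg, Real.exp_log hx]
    congr 1
    · rw [one_div]
    · rw [← Real.log_div hρ.ne' hx.ne', ← Real.log_rpow hdiv, Real.exp_log (by positivity)]
  have main : ∀ x y : ℝ, ρ ≤ x → x ≤ y →
      (1 / y) * (ρ / y) ^ (k * y) ≤ (1 / x) * (ρ / x) ^ (k * x) := by
    intro x y hx hxy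
    have hx0 : 0 < x := lt_of_lt_of_le hρ hx
    have hy0 : 0 < y := lt_of_lt_of_le hx0 hxy
    rw [key x hx0, key y hy0]
    exact Real.exp_le_exp.mpr (hanti hx (hx.trans hxy) hxy)
  refine ⟨main, fun αG θG hα hαθ => ?_⟩
  have hα0 : 0 < αG := lt_of_lt_of_le hρ hα
  have hθ0 : 0 < θG := lt_of_lt_of_le hα0 hαθ
  have hdα : (0:ℝ) < ρ / αG := by positivity
  have hdθ : (0:ℝ) < ρ / θG := by positivity
  have e1 : ((ρ / αG) ^ αG) ^ k = (ρ / αG) ^ (k * αG) := by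
    rw [← Real.rpow_mul hdα.le, mul_comm]
  have e2 : ((ρ / θG) ^ θG) ^ k = (ρ / θG) ^ (k * θG) := by
    rw [← Real.rpow_mul hdθ.le, mul_comm]
  have g1 : (ρ / θG) ^ (k * θG) / θG = 1 / θG * (ρ / θG) ^ (k * θG) := by ring
  have g2 : (ρ / αG) ^ (k * αG) / αG = 1 / αG * (ρ / αG) ^ (k * αG) := by ring
  rw [e1, e2, g1, g2]
  exact main αG θG hα hαθ
end
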